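/- Let V be the space of n×n real matrices with the nondegenerate invariant pairing ⟨A,B⟩ = tr(AB). Let f, g : V → ℝ be differentiable with gradient fields F, G : V → V, i.e. for all L, M: (Df)_L(M) = ⟨F(L), M⟩ and (Dg)_L(M) = ⟨G(L), M⟩, where F, G are differentiable. Let X : V → V be a differentiable vector field, and for each L let D_F(L), D_G(L) ∈ V be the adjoints defined by ⟨D_F(L), M⟩ = ⟨F(L), (DX)_L(M)⟩ and ⟨D_G(L), M⟩ = ⟨G(L), (DX)_L(M)⟩ for all M. Define the Lie–Poisson bracket {f,g}_P(L) = ⟨L, [F(L), G(L)]⟩, and let ∇(Xf), ∇(Xg) : V → V be gradient fields of the functions L ↦ (Df)_L(X(L)) and L ↦ (Dg)_L(X(L)). Then for every L: (D{f,g}_P)_L(X(L)) − ⟨L, [∇(Xf)(L), G(L)]⟩ − ⟨L, [F(L), ∇(Xg)(L)]⟩ = ⟨X(L), [F(L), G(L)]⟩ − ⟨L, [D_F(L), G(L)] + [F(L), D_G(L)]⟩. (This is the formula for the Poisson bracket obtained from the Lie derivative of the Lie–Poisson tensor along X.) -/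

import Mathlib

open Matrix

attribute [local instance] Matrix.normedAddCommGroup Matrix.normedSpace

namespace Stmt18Aux

variable {n : ℕ}

local notation "V" => Matrix (Fin n) (Fin n) ℝ

/-- The topology of the (local) norm on matrices. -/
abbrev matTop (n : ℕ) : TopologicalSpace (Matrix (Fin n) (Fin n) ℝ) :=
  @UniformSpace.toTopologicalSpace _ (@PseudoMetricSpace.toUniformSpace _
    (@SeminormedAddCommGroup.toPseudoMetricSpace _
      (@NormedAddCommGroup.toSeminormedAddCommGroup _ Matrix.normedAddCommGroup)))

attribute [local instance high] matTop

/-- The pairing `(A, B) ↦ (A * B).trace` as a continuous bilinear map. -/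
noncomputable def pairCLM (n : ℕ) : Matrix (Fin n) (Fin n) ℝ →L[ℝ]
    Matrix (Fin n) (Fin n) ℝ →L[ℝ] ℝ :=
  LinearMap.toContinuousLinearMap <|
    (LinearMap.toContinuousLinearMap : (Matrix (Fin n) (Fin n) ℝ →ₗ[ℝ] ℝ) ≃ₗ[ℝ] _).toLinearMap ∘ₗ
      LinearMap.mk₂ ℝ (fun A B => (A * B).trace)
        (fun A A' B => by simp [add_mul])
        (fun c A B => by simp [Matrix.smul_mul])
        (fun A B B' => by simp [mul_add])
        (fun c A B => by simp [Matrix.mul_smul])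

@[simp] lemma pairCLM_apply (A B : V) : pairCLM n A B = (A * B).trace := rfl

/-- Matrix multiplication as a continuous bilinear map. -/
noncomputable def mulCLM (n : ℕ) : Matrix (Fin n) (Fin n) ℝ →L[ℝ]
    Matrix (Fin n) (Fin n) ℝ →L[ℝ] Matrix (Fin n) (Fin n) ℝ :=
  LinearMap.toContinuousLinearMap <|
    (LinearMap.toContinuousLinearMap :
        (Matrix (Fin n) (Fin n) ℝ →ₗ[ℝ] Matrix (Fin n) (Fin n) ℝ) ≃ₗ[ℝ] _).toLinearMap ∘ₗ
      LinearMap.mul ℝ (Matrix (Fin n) (Fin n) ℝ)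

@[simp] lemma mulCLM_apply (A B : V) : mulCLM n A B = A * B := rfl

lemma fderiv_mul2 {u v : V → V} (hu : Differentiable ℝ u) (hv : Differentiable ℝ v)
    (L M : V) :
    fderiv ℝ (fun L' => u L' * v L') L M
      = fderiv ℝ u L M * v L + u L * fderiv ℝ v L M := by
  have h := (mulCLM n).fderiv_of_bilinear (hu L) (hv L)
  have : (fun L' => u L' * v L') = fun L' => mulCLM n (u L') (v L') := by
    funext L'; simp
  rw [this, h]
  simp [ContinuousLinearMap.precompR, ContinuousLinearMap.precompL, add_comm]

lemma differentiable_mul2 {u v : V → V} (hu : Differentiable ℝ u) (hv : Differentiable ℝ v) :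
    Differentiable ℝ (fun L' => u L' * v L') := by
  have : (fun L' => u L' * v L') = fun L' => mulCLM n (u L') (v L') := by
    funext L'; simp
  rw [this]
  intro L
  exact ((mulCLM n).hasFDerivAt_of_bilinear (hu L).hasFDerivAt (hv L).hasFDerivAt).differentiableAt

lemma fderiv_traceMul {u v : V → V} (hu : Differentiable ℝ u) (hv : Differentiable ℝ v)
    (L M : V) :
    fderiv ℝ (fun L' => (u L' * v L').trace) L M
      = (fderiv ℝ u L M * v L).trace + (u L * fderiv ℝ v L M).trace := by
  have h := (pairCLM n).fderiv_of_bilinear (hu L) (hv L)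
  have e : (fun L' => (u L' * v L').trace) = fun L' => pairCLM n (u L') (v L') := by
    funext L'; simp
  rw [e, h]
  simp [ContinuousLinearMap.precompR, ContinuousLinearMap.precompL, add_comm]

/-- Nondegeneracy of the trace pairing. -/
lemma nondeg {A B : V} (h : ∀ M : V, (A * M).trace = (B * M).trace) : A = B := by
  ext i j
  have := h (Matrix.single j i 1)
  simpa [Matrix.trace, Matrix.diag, Matrix.mul_apply, Matrix.single,
    ite_and, Finset.sum_ite_eq, Finset.sum_ite_eq'] using this

/-- Symmetry of the second derivative in trace-gradient form. -/
lemma second_symm {f : V → ℝ} {F : V → V} (hf : Differentiable ℝ f)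
    (hFd : Differentiable ℝ F) (hF : ∀ L M, fderiv ℝ f L M = (F L * M).trace)
    (L v w : V) :
    (fderiv ℝ F L v * w).trace = (fderiv ℝ F L w * v).trace := by
  have hf' : ∀ y : V, HasFDerivAt f (pairCLM n (F y)) y := by
    intro y
    have h1 := (hf y).hasFDerivAt
    have h2 : fderiv ℝ f y = pairCLM n (F y) := by
      ext M; simp [hF y M]
    rwa [h2] at h1
  have hder : HasFDerivAt (fun y => pairCLM n (F y))
      ((pairCLM n).comp (fderiv ℝ F L)) L :=
    (pairCLM n).hasFDerivAt.comp L (hFd L).hasFDerivAt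
  have := second_derivative_symmetric hf' hder v w
  simpa using this

end Stmt18Aux
/-- The Poisson bracket obtained from the Lie derivative of the Lie–Poisson
tensor along a vector field X. -/
theorem stmt_18 {n : ℕ}
    (f g : Matrix (Fin n) (Fin n) ℝ → ℝ)
    (F G X DF DG gXf gXg : Matrix (Fin n) (Fin n) ℝ → Matrix (Fin n) (Fin n) ℝ)
    (hf : Differentiable ℝ f) (hg : Differentiable ℝ g)
    (hFd : Differentiable ℝ F) (hGd : Differentiable ℝ G)
    (hXd : Differentiable ℝ X)
    (hF : ∀ L M, fderiv ℝ f L M = (F L * M).trace)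
    (hG : ∀ L M, fderiv ℝ g L M = (G L * M).trace)
    (hDF : ∀ L M, (DF L * M).trace = (F L * (fderiv ℝ X L M)).trace)
    (hDG : ∀ L M, (DG L * M).trace = (G L * (fderiv ℝ X L M)).trace)
    (hgXf : ∀ L M, fderiv ℝ (fun L' => fderiv ℝ f L' (X L')) L M = (gXf L * M).trace)
    (hgXg : ∀ L M, fderiv ℝ (fun L' => fderiv ℝ g L' (X L')) L M = (gXg L * M).trace) :
    ∀ L : Matrix (Fin n) (Fin n) ℝ,
      fderiv ℝ (fun L' => (L' * (F L' * G L' - G L' * F L')).trace) L (X L)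
          - (L * (gXf L * G L - G L * gXf L)).trace
          - (L * (F L * gXg L - gXg L * F L)).trace
        = (X L * (F L * G L - G L * F L)).trace
          - (L * ((DF L * G L - G L * DF L) + (F L * DG L - DG L * F L))).trace := by
  intro L
  set a := fderiv ℝ F L (X L) with ha
  set b := fderiv ℝ G L (X L) with hb
  -- identify the gradient of L' ↦ df_{L'}(X L')
  have hgXf' : gXf L = a + DF L := by
    apply Stmt18Aux.nondeg
    intro M
    have e1 : (fun L' => fderiv ℝ f L' (X L'))
        = fun L' => (F L' * X L').trace := funext fun L' => hF L' (X L')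
    calc (gXf L * M).trace
        = fderiv ℝ (fun L' => fderiv ℝ f L' (X L')) L M := (hgXf L M).symm
      _ = fderiv ℝ (fun L' => (F L' * X L').trace) L M := by rw [e1]
      _ = (fderiv ℝ F L M * X L).trace + (F L * fderiv ℝ X L M).trace :=
          Stmt18Aux.fderiv_traceMul hFd hXd L M
      _ = (a * M).trace + (DF L * M).trace := by
          erw [Stmt18Aux.second_symm hf hFd hF L M (X L), ← hDF L M, ← ha]
      _ = ((a + DF L) * M).trace := by rw [add_mul, Matrix.trace_add]
  have hgXg' : gXg L = b + DG L := by
    apply Stmt18Aux.nondeg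
    intro M
    have e1 : (fun L' => fderiv ℝ g L' (X L'))
        = fun L' => (G L' * X L').trace := funext fun L' => hG L' (X L')
    calc (gXg L * M).trace
        = fderiv ℝ (fun L' => fderiv ℝ g L' (X L')) L M := (hgXg L M).symm
      _ = fderiv ℝ (fun L' => (G L' * X L').trace) L M := by rw [e1]
      _ = (fderiv ℝ G L M * X L).trace + (G L * fderiv ℝ X L M).trace :=
          Stmt18Aux.fderiv_traceMul hGd hXd L M
      _ = (b * M).trace + (DG L * M).trace := by
          erw [Stmt18Aux.second_symm hg hGd hG L M (X L), ← hDG L M, ← hb]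
      _ = ((b + DG L) * M).trace := by rw [add_mul, Matrix.trace_add]
  -- differentiability of the bracket field
  have hFG : Differentiable ℝ (fun L' => F L' * G L') := Stmt18Aux.differentiable_mul2 hFd hGd
  have hGF : Differentiable ℝ (fun L' => G L' * F L') := Stmt18Aux.differentiable_mul2 hGd hFd
  have hC : Differentiable ℝ (fun L' => F L' * G L' - G L' * F L') := hFG.sub hGF
  -- derivative of the bracket field in direction X L
  have hdC : fderiv ℝ (fun L' => F L' * G L' - G L' * F L') L (X L)
      = (a * G L + F L * b) - (b * F L + G L * a) := by
    erw [fderiv_fun_sub (hFG L) (hGF L)]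
    exact congrArg₂ (· - ·) (Stmt18Aux.fderiv_mul2 hFd hGd L (X L))
      (Stmt18Aux.fderiv_mul2 hGd hFd L (X L))
  -- expand the main derivative term
  have hmain : fderiv ℝ (fun L' => (L' * (F L' * G L' - G L' * F L')).trace) L (X L)
      = (X L * (F L * G L - G L * F L)).trace
        + (L * ((a * G L + F L * b) - (b * F L + G L * a))).trace := by
    have := Stmt18Aux.fderiv_traceMul (u := fun L' => L') differentiable_id hC L (X L)
    erw [this, hdC, fderiv_id']
    simp
  rw [hmain, hgXf', hgXg']
  simp only [add_mul, mul_add, mul_sub, sub_mul, Matrix.trace_add, Matrix.trace_sub]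
  ring
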